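/- arXiv:1911.03693 — 6 statements merged into one kernel-verified Lean document; each statement's English description precedes it below -/
import Mathlib

section
/- For all x, y ≥ 0 and t > 0, |sinh(xy/t)·exp(-(x²+y²)/(2t)) - xy/t| ≤ xy(x²+y²)/(2t²). -/
open Real

lemma aux_mono : MonotoneOn (fun z : ℝ => z ^ 2 / 2 - z - Real.exp (-z)) (Set.Ici 0) := by
  have hderiv : ∀ z : ℝ, HasDerivAt (fun z : ℝ => z ^ 2 / 2 - z - Real.exp (-z))
      (z - 1 + Real.exp (-z)) z := by
    intro z
    have h1 : HasDerivAt (fun z : ℝ => Real.exp (-z)) (-Real.exp (-z)) z := by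
      simpa [Function.comp_def] using (Real.hasDerivAt_exp (-z)).comp z (hasDerivAt_neg z)
    have h2 : HasDerivAt (fun z : ℝ => z ^ 2 / 2 - z) (z - 1) z := by
      have := ((hasDerivAt_pow 2 z).div_const 2).sub (hasDerivAt_id z)
      simpa [Pi.sub_def] using this
    simpa [sub_eq_add_neg, Pi.add_def, Pi.neg_def] using h2.sub h1
  apply monotoneOn_of_deriv_nonneg (convex_Ici 0)
  · exact Continuous.continuousOn (by continuity)
  · intro z hz
    exact (hderiv z).differentiableAt.differentiableWithinAt
  · intro z hz
    rw [(hderiv z).deriv]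
    have hz0 : 0 ≤ z := le_of_lt (by simpa using hz)
    nlinarith [Real.add_one_le_exp (-z)]

/-- For `x, y ≥ 0` and `t > 0`,
`|sinh(xy/t)·exp(-(x²+y²)/(2t)) - xy/t| ≤ xy(x²+y²)/(2t²)`. -/
theorem abs_sinh_exp_sub_le (x y t : ℝ) (hx : 0 ≤ x) (hy : 0 ≤ y) (ht : 0 < t) :
    |Real.sinh (x * y / t) * Real.exp (-(x ^ 2 + y ^ 2) / (2 * t)) - x * y / t|
      ≤ x * y * (x ^ 2 + y ^ 2) / (2 * t ^ 2) := by
  set u : ℝ := (x - y) ^ 2 / (2 * t) with hu_def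
  set v : ℝ := (x + y) ^ 2 / (2 * t) with hv_def
  have hu : 0 ≤ u := div_nonneg (sq_nonneg _) (by linarith)
  have huv : u ≤ v := by
    rw [hu_def, hv_def, div_le_div_iff₀ (by linarith) (by linarith)]
    nlinarith [mul_nonneg (mul_nonneg hx hy) ht.le]
  have e1 : x * y / t + -(x ^ 2 + y ^ 2) / (2 * t) = -u := by
    rw [hu_def]; field_simp; ring
  have e2 : -(x * y / t) + -(x ^ 2 + y ^ 2) / (2 * t) = -v := by
    rw [hv_def]; field_simp; ring
  have hkey : Real.sinh (x * y / t) * Real.exp (-(x ^ 2 + y ^ 2) / (2 * t))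
      = (Real.exp (-u) - Real.exp (-v)) / 2 := by
    rw [Real.sinh_eq, div_mul_eq_mul_div, sub_mul, ← Real.exp_add, ← Real.exp_add, e1, e2]
  have hxy : x * y / t = (v - u) / 2 := by
    rw [hu_def, hv_def]; field_simp; ring
  have hlow : 0 ≤ (v + Real.exp (-v)) - (u + Real.exp (-u)) := by
    have h1 : Real.exp (-v) = Real.exp (-u) * Real.exp (u - v) := by
      rw [← Real.exp_add]; ring_nf
    have h2 : Real.exp (-u) ≤ 1 := Real.exp_le_one_iff.mpr (by linarith)
    have h3 : Real.exp (u - v) ≤ 1 := Real.exp_le_one_iff.mpr (by linarith)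
    have h4 := Real.add_one_le_exp (u - v)
    have h5 : 0 < Real.exp (-u) := Real.exp_pos _
    nlinarith
  have hupp : (v + Real.exp (-v)) - (u + Real.exp (-u)) ≤ (v ^ 2 - u ^ 2) / 2 := by
    have := aux_mono (Set.mem_Ici.mpr hu) (Set.mem_Ici.mpr (hu.trans huv)) huv
    simp only at this
    linarith
  have habs : |Real.sinh (x * y / t) * Real.exp (-(x ^ 2 + y ^ 2) / (2 * t)) - x * y / t|
      = ((v + Real.exp (-v)) - (u + Real.exp (-u))) / 2 := by
    rw [hkey, hxy, abs_of_nonpos (by linarith)]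
    ring
  rw [habs]
  have hfin : (v ^ 2 - u ^ 2) / 4 = x * y * (x ^ 2 + y ^ 2) / (2 * t ^ 2) := by
    rw [hu_def, hv_def]; field_simp; ring
  linarith
end

section
/- For all x, y ≥ 0 and t > 0, xy/t - sinh(xy/t)·exp(-(x²+y²)/(2t)) ≥ 0. -/
/-- For `x, y ≥ 0` and `t > 0`, `xy/t - sinh(xy/t)·exp(-(x²+y²)/(2t)) ≥ 0`. -/
theorem sinh_exp_le_lin (x y t : ℝ) (hx : 0 ≤ x) (hy : 0 ≤ y) (ht : 0 < t) :
    0 ≤ x * y / t - Real.sinh (x * y / t) * Real.exp (-(x ^ 2 + y ^ 2) / (2 * t)) := by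
  set a := x * y / t with ha
  have ha0 : 0 ≤ a := div_nonneg (mul_nonneg hx hy) ht.le
  have hba : -(x ^ 2 + y ^ 2) / (2 * t) ≤ -a := by
    rw [ha, ← neg_div, div_le_div_iff₀ (by linarith) ht]
    nlinarith [sq_nonneg (x - y)]
  have h1 : Real.sinh a * Real.exp (-(x ^ 2 + y ^ 2) / (2 * t)) ≤ Real.sinh a * Real.exp (-a) :=
    mul_le_mul_of_nonneg_left (Real.exp_le_exp.mpr hba) (by
      rw [Real.sinh_eq]
      have := Real.exp_le_exp.mpr (neg_le_self ha0)
      linarith)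
  have h2 : Real.sinh a * Real.exp (-a) ≤ a := by
    rw [Real.sinh_eq]
    have h3 : 1 - 2 * a ≤ Real.exp (-(2 * a)) := by
      have := Real.add_one_le_exp (-(2 * a)); linarith
    have h4 : Real.exp a * Real.exp (-a) = 1 := by
      rw [← Real.exp_add]; simp
    have h5 : Real.exp (-a) * Real.exp (-a) = Real.exp (-(2 * a)) := by
      rw [← Real.exp_add]; ring_nf
    nlinarith
  linarith
end

section
/- For each x > 0, t > 0, the function y ↦ (2/√(2πt))·(y/x)·sinh(xy/t)·exp(-(x²+y²)/(2t)) is a probability density on (0,∞), i.e., it is nonnegative and its integral over (0,∞) equals 1. -/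
open Real MeasureTheory Set

/-- For each `x > 0`, `t > 0`, the function
`y ↦ (2/√(2πt))·(y/x)·sinh(xy/t)·exp(-(x²+y²)/(2t))`
is a probability density on `(0,∞)`. -/
theorem bessel3_density_is_probability_density (x t : ℝ) (hx : 0 < x) (ht : 0 < t) :
    (∀ y ∈ Ioi (0 : ℝ),
        0 ≤ (2 / Real.sqrt (2 * π * t)) * (y / x) * Real.sinh (x * y / t)
          * Real.exp (-(x ^ 2 + y ^ 2) / (2 * t))) ∧
    ∫ y in Ioi (0 : ℝ),
        (2 / Real.sqrt (2 * π * t)) * (y / x) * Real.sinh (x * y / t)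
          * Real.exp (-(x ^ 2 + y ^ 2) / (2 * t)) = 1 := by
  have hπt : 0 < 2 * π * t := by positivity
  constructor
  · intro y hy
    have hy' : (0 : ℝ) < y := hy
    have hs : 0 ≤ Real.sinh (x * y / t) := Real.sinh_nonneg_iff.mpr (by positivity)
    positivity
  · set b : ℝ := 1 / (2 * t) with hbdef
    have hb0 : 0 < b := by positivity
    -- pointwise identity
    have key : ∀ y : ℝ,
        (2 / Real.sqrt (2 * π * t)) * (y / x) * Real.sinh (x * y / t)
          * Real.exp (-(x ^ 2 + y ^ 2) / (2 * t))
        = (1 / (x * Real.sqrt (2 * π * t))) *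
            (y * Real.exp (-b * (y - x) ^ 2) - y * Real.exp (-b * (y + x) ^ 2)) := by
      intro y
      have e1 : Real.exp (x * y / t) * Real.exp (-(x ^ 2 + y ^ 2) / (2 * t))
          = Real.exp (-b * (y - x) ^ 2) := by
        rw [← Real.exp_add]; congr 1; rw [hbdef]; field_simp; ring
      have e2 : Real.exp (-(x * y / t)) * Real.exp (-(x ^ 2 + y ^ 2) / (2 * t))
          = Real.exp (-b * (y + x) ^ 2) := by
        rw [← Real.exp_add]; congr 1; rw [hbdef]; field_simp; ring
      rw [Real.sinh_eq, ← e1, ← e2]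
      ring
    simp_rw [key, MeasureTheory.integral_const_mul]
    -- integrability facts
    have hI : Integrable (fun u : ℝ => u * Real.exp (-b * u ^ 2)) := by
      simpa using integrable_rpow_mul_exp_neg_mul_sq hb0 (by norm_num : (-1 : ℝ) < 1)
    have hE : Integrable (fun u : ℝ => Real.exp (-b * u ^ 2)) := integrable_exp_neg_mul_sq hb0
    have hf1 : Integrable (fun u : ℝ => (u + x) * Real.exp (-b * u ^ 2)) := by
      have := hI.add (hE.const_mul x)
      simpa [add_mul, Pi.add_def] using this
    have hf2 : Integrable (fun u : ℝ => (u - x) * Real.exp (-b * u ^ 2)) := by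
      have := hI.sub (hE.const_mul x)
      simpa [sub_mul, Pi.sub_def] using this
    have h1 : Integrable (fun y : ℝ => y * Real.exp (-b * (y - x) ^ 2)) := by
      have := hf1.comp_sub_right x
      simpa using this
    have h2 : Integrable (fun y : ℝ => y * Real.exp (-b * (y + x) ^ 2)) := by
      have := hf2.comp_sub_right (-x)
      simpa [sub_neg_eq_add] using this
    set g : ℝ → ℝ := fun y => y * Real.exp (-b * (y - x) ^ 2) - y * Real.exp (-b * (y + x) ^ 2)
      with hgdef
    have hg : Integrable g := h1.sub h2
    -- odd function integral is zero
    have hodd : ∫ u : ℝ, u * Real.exp (-b * u ^ 2) = 0 := by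
      have h0 := integral_neg_eq_self (fun u : ℝ => u * Real.exp (-b * u ^ 2)) (volume : Measure ℝ)
      simp only [neg_mul, neg_sq, integral_neg] at h0
      simp only [neg_mul]
      linarith
    -- whole-line integral of g
    have hwhole : ∫ y : ℝ, g y = 2 * x * Real.sqrt (π / b) := by
      rw [hgdef]
      rw [integral_sub h1 h2]
      have t1 : ∫ y : ℝ, y * Real.exp (-b * (y - x) ^ 2)
          = ∫ u : ℝ, (u + x) * Real.exp (-b * u ^ 2) := by
        have := integral_sub_right_eq_self (μ := volume) (fun u : ℝ => (u + x) * Real.exp (-b * u ^ 2)) x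
        rw [← this]
        congr 1 with y
        simp [sub_add_cancel]
      have t2 : ∫ y : ℝ, y * Real.exp (-b * (y + x) ^ 2)
          = ∫ u : ℝ, (u - x) * Real.exp (-b * u ^ 2) := by
        have := integral_add_right_eq_self (μ := volume) (fun u : ℝ => (u - x) * Real.exp (-b * u ^ 2)) x
        rw [← this]
        congr 1 with y
        simp [add_sub_cancel_right]
      rw [t1, t2]
      have s1 : ∫ u : ℝ, (u + x) * Real.exp (-b * u ^ 2)
          = x * Real.sqrt (π / b) := by
        simp_rw [add_mul]
        rw [integral_add hI (hE.const_mul x), hodd, integral_const_mul, integral_gaussian]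
        ring
      have s2 : ∫ u : ℝ, (u - x) * Real.exp (-b * u ^ 2)
          = -(x * Real.sqrt (π / b)) := by
        simp_rw [sub_mul]
        rw [integral_sub hI (hE.const_mul x), hodd, integral_const_mul, integral_gaussian]
        ring
      rw [s1, s2]; ring
    -- g is even
    have heven : ∀ y : ℝ, g (-y) = g y := by
      intro y
      rw [hgdef]
      have a1 : (-y - x) ^ 2 = (y + x) ^ 2 := by ring
      have a2 : (-y + x) ^ 2 = (y - x) ^ 2 := by ring
      simp only [a1, a2]
      ring
    have hsymm : ∫ y in Iic (0 : ℝ), g y = ∫ y in Ioi (0 : ℝ), g y := by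
      have h0 := integral_comp_neg_Ioi (0 : ℝ) g
      simp only [neg_zero] at h0
      rw [← h0]
      congr 1 with y
      exact heven y
    have hsplit : (∫ y in Iic (0 : ℝ), g y) + (∫ y in Ioi (0 : ℝ), g y) = ∫ y : ℝ, g y :=
      intervalIntegral.integral_Iic_add_Ioi hg.integrableOn hg.integrableOn
    have hIoi : ∫ y in Ioi (0 : ℝ), g y = x * Real.sqrt (π / b) := by
      rw [hsymm] at hsplit
      rw [hwhole] at hsplit
      linarith
    have hbb : π / b = 2 * π * t := by
      rw [hbdef]; field_simp
    rw [hIoi, hbb]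
    have hs : (0 : ℝ) < Real.sqrt (2 * π * t) := Real.sqrt_pos.mpr hπt
    field_simp
end

section
/- Let x > 0, t > 0, and let f : (0,∞) → ℝ be measurable with ∫₀^∞ |f(y)|y² dy < ∞ and ∫₀^∞ |f(y)|y⁴ dy < ∞. Then |∫₀^∞ f(y)·[t·(y/x)·sinh(xy/t)·e^{-(x²+y²)/(2t)} - y²] dy| ≤ (C_f·x² + C'_f)/t, where C_f = (1/2)∫₀^∞|f(y)|y²dy and C'_f = (1/2)∫₀^∞|f(y)|y⁴dy. -/
open MeasureTheory Set

lemma sinh_exp_approx_bound {a c : ℝ} (ha : 0 ≤ a) (hac : a ≤ c) :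
    |Real.sinh a * Real.exp (-c) - a| ≤ a * c := by
  have hc : 0 ≤ c := le_trans ha hac
  have hs : a ≤ Real.sinh a := by
    rcases eq_or_lt_of_le ha with h | h
    · simp [← h]
    · exact (Real.self_lt_sinh_iff.2 h).le
  have hep : (0:ℝ) < Real.exp (-c) := Real.exp_pos _
  rw [abs_le]
  constructor
  · have h1 : 1 - c ≤ Real.exp (-c) := by
      have := Real.add_one_le_exp (-c); linarith
    nlinarith [mul_le_mul_of_nonneg_left h1 ha,
      mul_le_mul_of_nonneg_right hs hep.le]
  · have h2 : Real.exp (-c) ≤ Real.exp (-a) := Real.exp_le_exp.2 (by linarith)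
    have h3 : Real.sinh a * Real.exp (-a) ≤ a := by
      have h4 : 1 - 2*a ≤ Real.exp (-(2*a)) := by
        have := Real.add_one_le_exp (-(2*a)); linarith
      have h5 : Real.exp (-a) * Real.exp a = 1 := by
        rw [← Real.exp_add]; simp
      have h6 : Real.exp (-(2*a)) = Real.exp (-a) * Real.exp (-a) := by
        rw [← Real.exp_add]; ring_nf
      rw [Real.sinh_eq]
      nlinarith [Real.exp_pos a, Real.exp_pos (-a)]
    have hsnn : (0:ℝ) ≤ Real.sinh a := le_trans ha hs
    nlinarith [mul_le_mul_of_nonneg_left h2 hsnn, mul_nonneg ha hc]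

/-- Quantitative approximation of the invariant measure of the Bessel-3 process by
its rescaled semigroup: for `x, t > 0` and `f` with `∫|f|y²dy, ∫|f|y⁴dy < ∞`,
`|∫ f(y)[t(y/x)sinh(xy/t)e^{-(x²+y²)/(2t)} - y²] dy| ≤ (C_f x² + C'_f)/t`. -/
theorem bessel3_semigroup_invariant_bound (x t : ℝ) (hx : 0 < x) (ht : 0 < t)
    (f : ℝ → ℝ) (hmeas : Measurable f)
    (hf2 : IntegrableOn (fun y => |f y| * y ^ 2) (Ioi (0 : ℝ)))
    (hf4 : IntegrableOn (fun y => |f y| * y ^ 4) (Ioi (0 : ℝ))) :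
    |∫ y in Ioi (0 : ℝ),
        f y * (t * (y / x) * Real.sinh (x * y / t)
          * Real.exp (-(x ^ 2 + y ^ 2) / (2 * t)) - y ^ 2)|
      ≤ (((1 : ℝ) / 2) * (∫ y in Ioi (0 : ℝ), |f y| * y ^ 2) * x ^ 2
          + ((1 : ℝ) / 2) * ∫ y in Ioi (0 : ℝ), |f y| * y ^ 4) / t := by
  set g : ℝ → ℝ := fun y => t * (y / x) * Real.sinh (x * y / t)
      * Real.exp (-(x ^ 2 + y ^ 2) / (2 * t)) - y ^ 2 with hgdef
  set B : ℝ → ℝ := fun y => x ^ 2 / (2 * t) * (|f y| * y ^ 2)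
      + 1 / (2 * t) * (|f y| * y ^ 4) with hBdef
  have hbound : ∀ y ∈ Ioi (0:ℝ), |g y| ≤ y ^ 2 * (x ^ 2 + y ^ 2) / (2 * t) := by
    intro y hy
    have hy0 : (0:ℝ) < y := hy
    have ha : (0:ℝ) ≤ x * y / t := by positivity
    have hac : x * y / t ≤ (x ^ 2 + y ^ 2) / (2 * t) := by
      rw [div_le_div_iff₀ ht (by positivity)]
      nlinarith [sq_nonneg (x - y)]
    have key := sinh_exp_approx_bound ha hac
    have hrw : g y = (t * (y / x)) *
        (Real.sinh (x * y / t) * Real.exp (-((x ^ 2 + y ^ 2) / (2 * t))) - x * y / t) := by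
      show t * (y / x) * Real.sinh (x * y / t)
          * Real.exp (-(x ^ 2 + y ^ 2) / (2 * t)) - y ^ 2 = _
      rw [neg_div]
      field_simp
    rw [hrw, abs_mul, abs_of_nonneg (show (0:ℝ) ≤ t * (y / x) by positivity)]
    calc t * (y / x) * |Real.sinh (x * y / t) * Real.exp (-((x ^ 2 + y ^ 2) / (2 * t))) - x * y / t|
        ≤ t * (y / x) * (x * y / t * ((x ^ 2 + y ^ 2) / (2 * t))) :=
          mul_le_mul_of_nonneg_left key (by positivity)
      _ = y ^ 2 * (x ^ 2 + y ^ 2) / (2 * t) := by field_simp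
  have hBint : IntegrableOn B (Ioi (0:ℝ)) := (hf2.const_mul _).add (hf4.const_mul _)
  have habs : ∀ᵐ y ∂(volume.restrict (Ioi (0:ℝ))), |f y * g y| ≤ B y := by
    refine (ae_restrict_mem measurableSet_Ioi).mono (fun y hy => ?_)
    have hy0 : (0:ℝ) < y := hy
    calc |f y * g y| = |f y| * |g y| := abs_mul _ _
      _ ≤ |f y| * (y ^ 2 * (x ^ 2 + y ^ 2) / (2 * t)) :=
          mul_le_mul_of_nonneg_left (hbound y hy) (abs_nonneg _)
      _ = B y := by rw [hBdef]; field_simp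
  calc |∫ y in Ioi (0:ℝ), f y * g y| ≤ ∫ y in Ioi (0:ℝ), |f y * g y| := by
        simpa only [Real.norm_eq_abs] using
          norm_integral_le_integral_norm (μ := volume.restrict (Ioi (0:ℝ))) (fun y => f y * g y)
    _ ≤ ∫ y in Ioi (0:ℝ), B y :=
        integral_mono_of_nonneg (Filter.Eventually.of_forall fun y => abs_nonneg _) hBint habs
    _ = x ^ 2 / (2 * t) * (∫ y in Ioi (0:ℝ), |f y| * y ^ 2)
        + 1 / (2 * t) * ∫ y in Ioi (0:ℝ), |f y| * y ^ 4 := by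
        rw [hBdef, integral_add (hf2.const_mul _) (hf4.const_mul _),
          integral_const_mul, integral_const_mul]
    _ = (((1 : ℝ) / 2) * (∫ y in Ioi (0 : ℝ), |f y| * y ^ 2) * x ^ 2
          + ((1 : ℝ) / 2) * ∫ y in Ioi (0 : ℝ), |f y| * y ^ 4) / t := by ring
end

section
/- Let x > 0 and let f : (0,∞) → [0,∞) be measurable and nonnegative with ∫₀^∞ f(y)y²dy < ∞ and ∫₀^∞ f(y)y⁴dy < ∞. Then t·∫₀^∞ f(y)·[y² - t·(y/x)·sinh(xy/t)·e^{-(x²+y²)/(2t)}] dy → ∫₀^∞ f(y)·y²(x²+y²)/2 dy as t → ∞. -/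
open MeasureTheory Set Filter

private lemma nonneg_of_deriv' {g g' : ℝ → ℝ} (h0 : g 0 = 0)
    (hd : ∀ v, HasDerivAt g (g' v) v) (hpos : ∀ v, 0 ≤ v → 0 ≤ g' v)
    {u : ℝ} (hu : 0 ≤ u) : 0 ≤ g u := by
  have hmono : MonotoneOn g (Ici (0:ℝ)) := by
    refine monotoneOn_of_deriv_nonneg (convex_Ici 0)
      (fun v _ => (hd v).continuousAt.continuousWithinAt)
      (fun v _ => ((hd v).differentiableAt).differentiableWithinAt) ?_
    intro v hv
    rw [(hd v).deriv]
    exact hpos v (le_of_lt (by simpa using hv))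
  have := hmono (self_mem_Ici) (by exact hu) hu
  simpa [h0] using this

private lemma my_sinh_le_mul_cosh {u : ℝ} (hu : 0 ≤ u) : Real.sinh u ≤ u * Real.cosh u := by
  have h : 0 ≤ u * Real.cosh u - Real.sinh u := by
    refine nonneg_of_deriv' (g := fun v => v * Real.cosh v - Real.sinh v)
      (g' := fun v => v * Real.sinh v) (by simp) (fun v => ?_)
      (fun v hv => mul_nonneg hv (Real.sinh_nonneg_iff.2 hv)) hu
    have := ((hasDerivAt_id v).mul (Real.hasDerivAt_cosh v)).sub (Real.hasDerivAt_sinh v)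
    exact this.congr_deriv (by simp only [id_eq]; ring)
  linarith

private lemma my_cosh_sub_one_le {u : ℝ} (hu : 0 ≤ u) : Real.cosh u - 1 ≤ u * Real.sinh u := by
  have h : 0 ≤ u * Real.sinh u - (Real.cosh u - 1) := by
    refine nonneg_of_deriv' (g := fun v => v * Real.sinh v - (Real.cosh v - 1))
      (g' := fun v => v * Real.cosh v) (by simp) (fun v => ?_)
      (fun v hv => mul_nonneg hv (Real.cosh_pos v).le) hu
    have := ((hasDerivAt_id v).mul (Real.hasDerivAt_sinh v)).sub
      ((Real.hasDerivAt_cosh v).sub_const 1)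
    exact this.congr_deriv (by simp only [id_eq]; ring)
  linarith

private lemma my_sinh_sub_le_mul {u : ℝ} (hu : 0 ≤ u) :
    Real.sinh u - u ≤ u * (Real.cosh u - 1) := by
  have h : 0 ≤ u * (Real.cosh u - 1) - (Real.sinh u - u) := by
    refine nonneg_of_deriv' (g := fun v => v * (Real.cosh v - 1) - (Real.sinh v - v))
      (g' := fun v => v * Real.sinh v) (by simp) (fun v => ?_)
      (fun v hv => mul_nonneg hv (Real.sinh_nonneg_iff.2 hv)) hu
    have := ((hasDerivAt_id v).mul ((Real.hasDerivAt_cosh v).sub_const 1)).sub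
      ((Real.hasDerivAt_sinh v).sub (hasDerivAt_id v))
    exact this.congr_deriv (by simp only [id_eq]; ring)
  linarith

private lemma sinh_cubic_bound' {u : ℝ} (hu : 0 ≤ u) :
    Real.sinh u - u ≤ u ^ 3 * Real.cosh u := by
  have h1 := my_sinh_sub_le_mul hu
  have h2 := my_cosh_sub_one_le hu
  have h3 := my_sinh_le_mul_cosh hu
  nlinarith [Real.cosh_pos (x := u), Real.sinh_nonneg_iff.2 hu, sq_nonneg u]

private lemma exp_limit' (c : ℝ) :
    Tendsto (fun t : ℝ => t * (1 - Real.exp (-(c / t)))) atTop (nhds c) := by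
  have hd : HasDerivAt (fun h : ℝ => 1 - Real.exp (-(c * h))) c 0 := by
    have h1 : HasDerivAt (fun h : ℝ => -(c * h)) (-c) 0 := by
      exact ((hasDerivAt_id' (0:ℝ)).const_mul c).neg.congr_deriv (by ring)
    have h2 := (Real.hasDerivAt_exp (-(c * 0))).comp 0 h1
    have h3 := h2.const_sub 1
    exact h3.congr_deriv (by simp)
  rw [hasDerivAt_iff_tendsto_slope] at hd
  have hinv : Tendsto (fun t : ℝ => t⁻¹) atTop (nhdsWithin (0:ℝ) {(0:ℝ)}ᶜ) := by
    refine tendsto_nhdsWithin_of_tendsto_nhds_of_eventually_within _ tendsto_inv_atTop_zero ?_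
    filter_upwards [eventually_gt_atTop (0:ℝ)] with t ht
    exact (inv_ne_zero ht.ne')
  have := hd.comp hinv
  refine this.congr' ?_
  filter_upwards [eventually_gt_atTop (0:ℝ)] with t ht
  have ht' : t⁻¹ ≠ 0 := inv_ne_zero ht.ne'
  simp only [Function.comp, slope_def_field]
  field_simp
  simp

private lemma key_ineq' {x y t : ℝ} (hx : 0 < x) (hy : 0 < y) (ht : 0 < t) :
    0 ≤ y ^ 2 - t * (y / x) * Real.sinh (x * y / t) * Real.exp (-(x ^ 2 + y ^ 2) / (2 * t)) ∧
    t * (y ^ 2 - t * (y / x) * Real.sinh (x * y / t) * Real.exp (-(x ^ 2 + y ^ 2) / (2 * t)))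
      ≤ y ^ 2 * (x ^ 2 + y ^ 2) / 2 := by
  set u := x * y / t with hu_def
  set a := (x ^ 2 + y ^ 2) / (2 * t) with ha_def
  have hu : 0 < u := by positivity
  have ha : 0 < a := by positivity
  have hau : u ≤ a := by
    rw [hu_def, ha_def, div_le_div_iff₀ (by positivity) (by positivity)]
    nlinarith [sq_nonneg (x - y)]
  have hexp_eq : Real.exp (-(x ^ 2 + y ^ 2) / (2 * t)) = Real.exp (-a) := by
    rw [ha_def]; ring_nf
  have htyx : (0:ℝ) ≤ t * (y / x) := by positivity
  have htyxu : t * (y / x) * u = y ^ 2 := by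
    rw [hu_def]; field_simp
  constructor
  · -- nonneg: sinh u * exp (-a) ≤ u
    have h1 : Real.sinh u * Real.exp (-a) ≤ Real.sinh u * Real.exp (-u) :=
      mul_le_mul_of_nonneg_left (Real.exp_le_exp.2 (by linarith)) (Real.sinh_nonneg_iff.2 hu.le)
    have h2 : Real.sinh u * Real.exp (-u) ≤ u := by
      have h3 : 1 - Real.exp (-(2 * u)) ≤ 2 * u := by
        have := Real.add_one_le_exp (-(2 * u))
        linarith
      have e2 : Real.exp u * Real.exp (-u) = 1 := by rw [← Real.exp_add]; simp
      have e3 : Real.exp (-u) * Real.exp (-u) = Real.exp (-(2 * u)) := by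
        rw [← Real.exp_add]; ring_nf
      rw [Real.sinh_eq]
      nlinarith [e2, e3, h3]
    have h4 : t * (y / x) * (Real.sinh u * Real.exp (-a)) ≤ t * (y / x) * u :=
      mul_le_mul_of_nonneg_left (h1.trans h2) htyx
    rw [htyxu] at h4
    rw [hexp_eq]
    nlinarith [h4]
  · -- upper bound
    have hsinh : u ≤ Real.sinh u := Real.self_le_sinh_iff.2 hu.le
    have hexp_pos : (0:ℝ) < Real.exp (-a) := Real.exp_pos _
    have h5 : t * (y / x) * u * Real.exp (-a) ≤ t * (y / x) * Real.sinh u * Real.exp (-a) := by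
      have h := mul_le_mul_of_nonneg_left hsinh htyx
      exact mul_le_mul_of_nonneg_right h hexp_pos.le
    have h6 : y ^ 2 - t * (y / x) * Real.sinh u * Real.exp (-a)
        ≤ y ^ 2 * (1 - Real.exp (-a)) := by
      have : t * (y / x) * u * Real.exp (-a) = y ^ 2 * Real.exp (-a) := by
        rw [← htyxu]
      linarith [h5, this.symm.le, this.le]
    have h7 : 1 - Real.exp (-a) ≤ a := by
      have := Real.add_one_le_exp (-a); linarith
    have h8 : t * (y ^ 2 - t * (y / x) * Real.sinh u * Real.exp (-a)) ≤ t * (y ^ 2 * a) := by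
      have hy2 : (0:ℝ) ≤ y ^ 2 := sq_nonneg y
      have : y ^ 2 * (1 - Real.exp (-a)) ≤ y ^ 2 * a := mul_le_mul_of_nonneg_left h7 hy2
      exact mul_le_mul_of_nonneg_left (h6.trans this) ht.le
    have h9 : t * (y ^ 2 * a) = y ^ 2 * (x ^ 2 + y ^ 2) / 2 := by
      rw [ha_def]; field_simp
    rw [hexp_eq]
    rw [h9] at h8
    exact h8

private lemma core_limit' {x y : ℝ} (hx : 0 < x) (hy : 0 < y) :
    Tendsto (fun t : ℝ => t * (y ^ 2 - t * (y / x) * Real.sinh (x * y / t)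
        * Real.exp (-(x ^ 2 + y ^ 2) / (2 * t)))) atTop
      (nhds (y ^ 2 * (x ^ 2 + y ^ 2) / 2)) := by
  set c := (x ^ 2 + y ^ 2) / 2 with hc_def
  have h1 : Tendsto (fun t : ℝ => y ^ 2 * (t * (1 - Real.exp (-(c / t))))) atTop
      (nhds (y ^ 2 * c)) := (exp_limit' c).const_mul _
  have h2 : Tendsto (fun t : ℝ => Real.exp (-(c / t)) * (t ^ 2 * (y / x)
      * (Real.sinh (x * y / t) - x * y / t))) atTop (nhds 0) := by
    have hB : Tendsto (fun t : ℝ => (y / x) * (x * y) ^ 3 * t⁻¹ * Real.cosh (x * y * t⁻¹))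
        atTop (nhds 0) := by
      have hA : Tendsto (fun t : ℝ => (y / x) * (x * y) ^ 3 * t⁻¹) atTop (nhds 0) := by
        simpa using tendsto_inv_atTop_zero.const_mul ((y / x) * (x * y) ^ 3)
      have hC : Tendsto (fun t : ℝ => Real.cosh (x * y * t⁻¹)) atTop (nhds 1) := by
        have : Tendsto (fun t : ℝ => x * y * t⁻¹) atTop (nhds 0) := by
          simpa using tendsto_inv_atTop_zero.const_mul (x * y)
        simpa [Function.comp_def] using (Real.continuous_cosh.tendsto 0).comp this
      simpa using hA.mul hC
    refine tendsto_of_tendsto_of_tendsto_of_le_of_le' tendsto_const_nhds hB ?_ ?_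
    · filter_upwards [eventually_gt_atTop (0:ℝ)] with t ht
      have hu : 0 < x * y / t := by positivity
      have hs : (0:ℝ) ≤ Real.sinh (x * y / t) - x * y / t := by
        have := Real.self_le_sinh_iff.2 hu.le; linarith
      have : (0:ℝ) ≤ t ^ 2 * (y / x) := by positivity
      exact mul_nonneg (Real.exp_pos _).le (mul_nonneg this hs)
    · filter_upwards [eventually_gt_atTop (0:ℝ)] with t ht
      have hu : 0 < x * y / t := by positivity
      have hcube := sinh_cubic_bound' hu.le
      have hexp1 : Real.exp (-(c / t)) ≤ 1 := by
        rw [Real.exp_le_one_iff]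
        have : 0 < c / t := by rw [hc_def]; positivity
        linarith
      have hfac : (0:ℝ) ≤ t ^ 2 * (y / x) * (Real.sinh (x * y / t) - x * y / t) := by
        have : x * y / t ≤ Real.sinh (x * y / t) := Real.self_le_sinh_iff.2 hu.le
        have h' : (0:ℝ) ≤ t ^ 2 * (y / x) := by positivity
        nlinarith
      calc Real.exp (-(c / t)) * (t ^ 2 * (y / x) * (Real.sinh (x * y / t) - x * y / t))
          ≤ 1 * (t ^ 2 * (y / x) * (Real.sinh (x * y / t) - x * y / t)) :=
            mul_le_mul_of_nonneg_right hexp1 hfac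
        _ ≤ t ^ 2 * (y / x) * ((x * y / t) ^ 3 * Real.cosh (x * y / t)) := by
            have h' : (0:ℝ) ≤ t ^ 2 * (y / x) := by positivity
            rw [one_mul]
            exact mul_le_mul_of_nonneg_left hcube h'
        _ = (y / x) * (x * y) ^ 3 * t⁻¹ * Real.cosh (x * y * t⁻¹) := by
            have hxyt : x * y * t⁻¹ = x * y / t := (div_eq_mul_inv _ _).symm
            rw [hxyt]
            have ht0 : t ≠ 0 := ht.ne'
            have hx0 : x ≠ 0 := hx.ne'
            field_simp
  have hsum := h1.sub h2
  rw [sub_zero] at hsum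
  have hval : y ^ 2 * c = y ^ 2 * (x ^ 2 + y ^ 2) / 2 := by rw [hc_def]; ring
  rw [hval] at hsum
  refine hsum.congr' ?_
  filter_upwards [eventually_gt_atTop (0:ℝ)] with t ht
  have hE : Real.exp (-(c / t)) = Real.exp (-(x ^ 2 + y ^ 2) / (2 * t)) := by
    rw [hc_def]; ring_nf
  rw [hE]
  have ht0 : t ≠ 0 := ht.ne'
  have hx0 : x ≠ 0 := hx.ne'
  field_simp
  ring

/-- First-order correction of the rescaled Bessel-3 semigroup: for `x > 0` and
nonnegative `f` with `∫ f y² dy, ∫ f y⁴ dy < ∞`,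
`t·∫ f(y)[y² - t(y/x)sinh(xy/t)e^{-(x²+y²)/(2t)}] dy → ∫ f(y) y²(x²+y²)/2 dy`. -/
theorem bessel3_semigroup_first_order (x : ℝ) (hx : 0 < x)
    (f : ℝ → ℝ) (hmeas : Measurable f) (hf : ∀ y, 0 ≤ f y)
    (hf2 : IntegrableOn (fun y => f y * y ^ 2) (Ioi (0 : ℝ)))
    (hf4 : IntegrableOn (fun y => f y * y ^ 4) (Ioi (0 : ℝ))) :
    Tendsto (fun t : ℝ =>
        t * ∫ y in Ioi (0 : ℝ),
            f y * (y ^ 2 - t * (y / x) * Real.sinh (x * y / t)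
              * Real.exp (-(x ^ 2 + y ^ 2) / (2 * t))))
      atTop
      (nhds (∫ y in Ioi (0 : ℝ), f y * (y ^ 2 * (x ^ 2 + y ^ 2) / 2))) := by
  have hbound_int : Integrable (fun y => f y * (y ^ 2 * (x ^ 2 + y ^ 2) / 2))
      (volume.restrict (Ioi (0:ℝ))) := by
    have heq : (fun y : ℝ => f y * (y ^ 2 * (x ^ 2 + y ^ 2) / 2))
        = fun y => x ^ 2 / 2 * (f y * y ^ 2) + 1 / 2 * (f y * y ^ 4) := by
      funext y; ring
    rw [heq]
    exact (hf2.const_mul _).add (hf4.const_mul _)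
  have hDCT := MeasureTheory.tendsto_integral_filter_of_dominated_convergence
    (μ := volume.restrict (Ioi (0:ℝ))) (l := atTop)
    (F := fun (t : ℝ) (y : ℝ) => t * (f y * (y ^ 2 - t * (y / x) * Real.sinh (x * y / t)
      * Real.exp (-(x ^ 2 + y ^ 2) / (2 * t)))))
    (f := fun y => f y * (y ^ 2 * (x ^ 2 + y ^ 2) / 2))
    (bound := fun y => f y * (y ^ 2 * (x ^ 2 + y ^ 2) / 2))
    ?_ ?_ hbound_int ?_
  · exact hDCT.congr fun t => MeasureTheory.integral_const_mul t _
  · -- measurability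
    refine Eventually.of_forall fun t => ?_
    have hg : Continuous fun y : ℝ => y ^ 2 - t * (y / x) * Real.sinh (x * y / t)
        * Real.exp (-(x ^ 2 + y ^ 2) / (2 * t)) := by fun_prop
    exact ((hmeas.mul hg.measurable).const_mul t).aestronglyMeasurable
  · -- bound
    filter_upwards [eventually_gt_atTop (0:ℝ)] with t ht
    rw [ae_restrict_iff' measurableSet_Ioi]
    filter_upwards with y hy
    obtain ⟨hpos, hupper⟩ := key_ineq' hx hy ht
    have hinner_nonneg : (0:ℝ) ≤ t * (f y * (y ^ 2 - t * (y / x) * Real.sinh (x * y / t)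
        * Real.exp (-(x ^ 2 + y ^ 2) / (2 * t)))) :=
      mul_nonneg ht.le (mul_nonneg (hf y) hpos)
    rw [Real.norm_eq_abs, abs_of_nonneg hinner_nonneg]
    calc t * (f y * (y ^ 2 - t * (y / x) * Real.sinh (x * y / t)
          * Real.exp (-(x ^ 2 + y ^ 2) / (2 * t))))
        = f y * (t * (y ^ 2 - t * (y / x) * Real.sinh (x * y / t)
          * Real.exp (-(x ^ 2 + y ^ 2) / (2 * t)))) := by ring
      _ ≤ f y * (y ^ 2 * (x ^ 2 + y ^ 2) / 2) := mul_le_mul_of_nonneg_left hupper (hf y)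
  · -- pointwise limit
    rw [ae_restrict_iff' measurableSet_Ioi]
    filter_upwards with y
    intro hy
    have h := (core_limit' hx (mem_Ioi.mp hy)).const_mul (f y)
    refine h.congr fun t => by ring
end

section
/- Let r > 0, η(x) = x·e^{rx}/r², let μ be a probability measure on (0,∞) with ∫₀^∞ x³e^{rx}μ(dx) < ∞, let α be the measure with density r²ye^{-ry} on (0,∞), and define ψ_μ(f) = ∫₀^∞∫₀^∞ f(y)·(y²(x²+y²)/2)·(η(x)/η(y))·(μ(dx)/μ(η)) dy. Then for any bounded measurable f ≥ 0, ψ_μ(f) = (1/2)·α(f)·∫₀^∞ x²(η∘μ)(dx) + (1/2)·∫₀^∞ f(y)y²α(dy), where (η∘μ)(dx) = η(x)μ(dx)/μ(η). Consequently, if ∫y²f(y)α(dy) > α(f)·∫y²α(dy), then ψ_μ(f) > α(f)·ψ_μ(1). -/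
open MeasureTheory Set Filter Asymptotics

open MeasureTheory Set Filter Asymptotics

lemma aux_integrableOn_pow_exp (n : ℕ) {r : ℝ} (hr : 0 < r) :
    IntegrableOn (fun y : ℝ => y ^ n * Real.exp (-r * y)) (Ioi (0:ℝ)) := by
  apply integrable_of_isBigO_exp_neg (half_pos hr)
  · exact ((continuous_pow n).mul
      (Real.continuous_exp.comp (continuous_const.mul continuous_id))).continuousOn
  · have ht : Tendsto (fun y : ℝ => y ^ n * Real.exp (-(r/2) * y)) atTop (nhds 0) := by
      have := tendsto_rpow_mul_exp_neg_mul_atTop_nhds_zero (n : ℝ) (r/2) (half_pos hr)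
      simpa [Real.rpow_natCast] using this
    have h1 : (fun y : ℝ => y ^ n * Real.exp (-(r/2) * y)) =O[atTop] (fun _ : ℝ => (1:ℝ)) :=
      ht.isBigO_one ℝ
    have h2 := h1.mul (isBigO_refl (fun y : ℝ => Real.exp (-(r/2) * y)) atTop)
    refine h2.congr (fun y => ?_) (fun y => one_mul _)
    rw [mul_assoc, ← Real.exp_add]
    ring_nf

lemma aux_alpha_one {r : ℝ} (hr : 0 < r) :
    ∫ y in Ioi (0:ℝ), r ^ 2 * y * Real.exp (-r * y) = 1 := by
  have h := Real.integral_rpow_mul_exp_neg_mul_Ioi (by norm_num : (0:ℝ) < 2) hr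
  norm_num [Real.Gamma_two, Real.rpow_natCast, Real.rpow_one] at h
  have : ∫ y in Ioi (0:ℝ), r ^ 2 * y * Real.exp (-r * y)
      = r ^ 2 * ∫ t in Ioi (0:ℝ), t * Real.exp (-(r * t)) := by
    rw [← integral_const_mul]
    exact setIntegral_congr_fun measurableSet_Ioi (fun y _ => by rw [neg_mul]; ring)
  rw [this, h, mul_inv_cancel₀ (by positivity)]

lemma aux_decomp (r : ℝ) (hr : 0 < r)
    (μ : Measure ℝ) [IsProbabilityMeasure μ] (hsupp : μ (Ioi (0 : ℝ))ᶜ = 0)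
    (hint : Integrable (fun x => x ^ 3 * Real.exp (r * x)) μ)
    (f : ℝ → ℝ) (hmeas : Measurable f) (hpos : ∀ y, 0 ≤ f y)
    (hbdd : ∃ Cb : ℝ, ∀ y, f y ≤ Cb) :
    (∫ x, (∫ y in Ioi (0 : ℝ),
          f y * (y ^ 2 * (x ^ 2 + y ^ 2) / 2) *
            ((x * Real.exp (r * x) / r ^ 2) / (y * Real.exp (r * y) / r ^ 2)) /
            (∫ z, z * Real.exp (r * z) / r ^ 2 ∂μ)) ∂μ)
      = (1 / 2) * (∫ y in Ioi (0 : ℝ), f y * (r ^ 2 * y * Real.exp (-r * y)))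
          * (∫ x, x ^ 2 * (x * Real.exp (r * x) / r ^ 2) /
              (∫ z, z * Real.exp (r * z) / r ^ 2 ∂μ) ∂μ)
        + (1 / 2) * ∫ y in Ioi (0 : ℝ),
            f y * y ^ 2 * (r ^ 2 * y * Real.exp (-r * y)) := by
  obtain ⟨Cb, hCb⟩ := hbdd
  set η : ℝ → ℝ := fun x => x * Real.exp (r * x) / r ^ 2 with hηdef
  set M : ℝ := ∫ z, η z ∂μ with hM
  set g : ℝ → ℝ := fun y => r ^ 2 * y * Real.exp (-r * y) with hg
  set A : ℝ := ∫ y in Ioi (0:ℝ), f y * g y with hA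
  set B : ℝ := ∫ y in Ioi (0:ℝ), f y * y ^ 2 * g y with hB
  have hae : ∀ᵐ x ∂μ, x ∈ Ioi (0:ℝ) := by
    rw [ae_iff]
    exact hsupp
  -- integrability facts
  have hgi : IntegrableOn g (Ioi (0:ℝ)) := by
    have := (aux_integrableOn_pow_exp 1 hr).const_mul (r ^ 2)
    exact this.congr (ae_of_all _ fun y => by simp [hg]; ring)
  have hg2i : IntegrableOn (fun y => y ^ 2 * g y) (Ioi (0:ℝ)) := by
    have := (aux_integrableOn_pow_exp 3 hr).const_mul (r ^ 2)
    exact this.congr (ae_of_all _ fun y => by simp [hg]; ring)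
  have hfb : ∃ C, ∀ y, ‖f y‖ ≤ C :=
    ⟨Cb, fun y => by rw [Real.norm_eq_abs, abs_of_nonneg (hpos y)]; exact hCb y⟩
  have i1 : IntegrableOn (fun y => f y * g y) (Ioi (0:ℝ)) :=
    hgi.bdd_mul hmeas.aestronglyMeasurable (ae_of_all _ hfb.choose_spec)
  have i2 : IntegrableOn (fun y => f y * y ^ 2 * g y) (Ioi (0:ℝ)) :=
    (hg2i.bdd_mul hmeas.aestronglyMeasurable (ae_of_all _ hfb.choose_spec)).congr
      (ae_of_all _ fun y => by ring)
  have iη : Integrable η μ := by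
    refine Integrable.mono' ((integrable_const (Real.exp r) |>.add hint).div_const (r^2))
      ?_ ?_
    · exact (Continuous.aestronglyMeasurable (by fun_prop))
    · filter_upwards [hae] with x hx
      have hx0 : (0:ℝ) < x := hx
      simp only [hηdef, Real.norm_eq_abs]
      rw [abs_of_nonneg (div_nonneg (mul_nonneg hx0.le (Real.exp_pos _).le) (by positivity))]
      gcongr ?_ / _
      simp only [Pi.add_apply]
      rcases le_total x 1 with h1 | h1
      · have e1 : Real.exp (r * x) ≤ Real.exp r := by
          apply Real.exp_le_exp.mpr; nlinarith
        nlinarith [Real.exp_pos (r*x), pow_nonneg hx0.le 3, mul_nonneg (pow_nonneg hx0.le 3) (Real.exp_pos (r*x)).le]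
      · have e1 : x ≤ x ^ 3 := by nlinarith [mul_le_mul_of_nonneg_left (one_le_pow₀ h1 (n := 2)) hx0.le]
        nlinarith [Real.exp_pos (r*x), Real.exp_pos r]
  have iη2 : Integrable (fun x => x ^ 2 * η x) μ := by
    have := hint.div_const (r ^ 2)
    exact this.congr (ae_of_all _ fun x => by rw [hηdef]; ring)
  have hMpos : 0 < M := by
    rw [hM]
    rw [integral_pos_iff_support_of_nonneg_ae _ iη]
    · have hsub : Ioi (0:ℝ) ⊆ Function.support η := fun x hx => by
        have hx0 : (0:ℝ) < x := hx
        simp only [hηdef, Function.mem_support]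
        positivity
      have hIoi : μ (Ioi (0:ℝ)) = 1 := by
        have := measure_add_measure_compl (μ := μ) (measurableSet_Ioi (a := (0:ℝ)))
        rw [hsupp, add_zero, measure_univ] at this
        exact this
      calc (0:ENNReal) < 1 := by norm_num
        _ = μ (Ioi 0) := hIoi.symm
        _ ≤ μ (Function.support η) := measure_mono hsub
    · filter_upwards [hae] with x hx
      have : (0:ℝ) < x := hx
      rw [hηdef]; positivity
  -- inner integral
  have inner : ∀ x ∈ Ioi (0:ℝ),
      (∫ y in Ioi (0:ℝ), f y * (y ^ 2 * (x ^ 2 + y ^ 2) / 2) * (η x / η y) / M)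
        = A / 2 * (x ^ 2 * η x / M) + B / 2 * (η x / M) := by
    intro x hx
    have hx0 : (0:ℝ) < x := hx
    have step : (∫ y in Ioi (0:ℝ), f y * (y ^ 2 * (x ^ 2 + y ^ 2) / 2) * (η x / η y) / M)
        = ∫ y in Ioi (0:ℝ),
            (f y * g y) * (x ^ 2 * η x / M / 2) + (f y * y ^ 2 * g y) * (η x / M / 2) := by
      apply setIntegral_congr_fun measurableSet_Ioi
      intro y hy
      have hy0 : (0:ℝ) < y := hy
      have hey : Real.exp (r * y) ≠ 0 := (Real.exp_pos _).ne'
      simp only [hηdef, hg]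
      rw [neg_mul, Real.exp_neg]
      field_simp
    rw [step, integral_add (i1.mul_const _) (i2.mul_const _),
      integral_mul_const, integral_mul_const, ← hA, ← hB]
    ring
  -- outer integral
  have houter : (∫ x, (∫ y in Ioi (0:ℝ),
        f y * (y ^ 2 * (x ^ 2 + y ^ 2) / 2) * (η x / η y) / M) ∂μ)
      = ∫ x, (A / 2 * (x ^ 2 * η x / M) + B / 2 * (η x / M)) ∂μ := by
    apply integral_congr_ae
    filter_upwards [hae] with x hx
    exact inner x hx
  rw [houter, integral_add (((iη2.div_const M).const_mul _)) ((iη.div_const M).const_mul _),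
    integral_const_mul, integral_const_mul, integral_div, integral_div, ← hM,
    div_self hMpos.ne']
  ring


/-- Decomposition of the first-order correction measure `ψ_μ`. Let `r > 0`,
`η(x) = x e^{rx}/r²`, let `μ` be a probability measure on `(0,∞)` with
`∫ x³ e^{rx} μ(dx) < ∞`, and let `α` be the measure with density `r² y e^{-ry}` on
`(0,∞)`. With `ψ_μ(f) = ∫∫ f(y) (y²(x²+y²)/2)(η(x)/η(y)) μ(dx)/μ(η) dy`, for any
bounded measurable `f ≥ 0`,
`ψ_μ(f) = (1/2) α(f) ∫ x² (η∘μ)(dx) + (1/2) ∫ f(y) y² α(dy)`;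
consequently, if `∫ y² f α(dy) > α(f) ∫ y² α(dy)`, then `ψ_μ(f) > α(f) ψ_μ(1)`. -/
theorem psi_decomposition_and_lower_bound (r : ℝ) (hr : 0 < r)
    (μ : Measure ℝ) [IsProbabilityMeasure μ] (hsupp : μ (Ioi (0 : ℝ))ᶜ = 0)
    (hint : Integrable (fun x => x ^ 3 * Real.exp (r * x)) μ)
    (η : ℝ → ℝ) (hη : ∀ x, η x = x * Real.exp (r * x) / r ^ 2)
    (f : ℝ → ℝ) (hmeas : Measurable f) (hpos : ∀ y, 0 ≤ f y)
    (hbdd : ∃ Cb : ℝ, ∀ y, f y ≤ Cb) :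
    (∫ x, (∫ y in Ioi (0 : ℝ),
          f y * (y ^ 2 * (x ^ 2 + y ^ 2) / 2) * (η x / η y) / (∫ z, η z ∂μ)) ∂μ)
      = (1 / 2) * (∫ y in Ioi (0 : ℝ), f y * (r ^ 2 * y * Real.exp (-r * y)))
          * (∫ x, x ^ 2 * η x / (∫ z, η z ∂μ) ∂μ)
        + (1 / 2) * ∫ y in Ioi (0 : ℝ), f y * y ^ 2 * (r ^ 2 * y * Real.exp (-r * y)) ∧
    ((∫ y in Ioi (0 : ℝ), y ^ 2 * f y * (r ^ 2 * y * Real.exp (-r * y)))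
        > (∫ y in Ioi (0 : ℝ), f y * (r ^ 2 * y * Real.exp (-r * y)))
          * (∫ y in Ioi (0 : ℝ), y ^ 2 * (r ^ 2 * y * Real.exp (-r * y))) →
      (∫ x, (∫ y in Ioi (0 : ℝ),
            f y * (y ^ 2 * (x ^ 2 + y ^ 2) / 2) * (η x / η y) / (∫ z, η z ∂μ)) ∂μ)
        > (∫ y in Ioi (0 : ℝ), f y * (r ^ 2 * y * Real.exp (-r * y)))
          * ∫ x, (∫ y in Ioi (0 : ℝ),
              (y ^ 2 * (x ^ 2 + y ^ 2) / 2) * (η x / η y) / (∫ z, η z ∂μ)) ∂μ) := by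
  
  have hηf : η = fun x => x * Real.exp (r * x) / r ^ 2 := funext hη
  subst hηf
  beta_reduce
  have hf := aux_decomp r hr μ hsupp hint f hmeas hpos hbdd
  constructor
  · exact hf
  · intro hyp
    have h1 := aux_decomp r hr μ hsupp hint (fun _ => 1) measurable_const
      (fun _ => zero_le_one) ⟨1, fun _ => le_rfl⟩
    simp only [one_mul] at h1
    rw [aux_alpha_one hr] at h1
    have hBB : (∫ y in Ioi (0:ℝ), y ^ 2 * f y * (r ^ 2 * y * Real.exp (-r * y)))
        = ∫ y in Ioi (0:ℝ), f y * y ^ 2 * (r ^ 2 * y * Real.exp (-r * y)) :=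
      setIntegral_congr_fun measurableSet_Ioi (fun y _ => by ring)
    rw [hBB] at hyp
    rw [hf, h1]
    nlinarith [hyp]
end
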